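/- Let S be a join-semilattice with zero and let δ : X × X → S be a V-distance of type 3/2 whose range join-generates S. Then S satisfies WURP=(e) for every e ∈ S; moreover, if e = ⋁_{ℓ<n} δ(x_ℓ, y_ℓ), then m = 2^n witnesses WURP=(e). -/
import Mathlib


universe u

/-- An `S`-valued distance on `X`. -/
def IsSDistance {X : Type*} {S : Type*} [SemilatticeSup S] [OrderBot S]
    (δ : X → X → S) : Prop :=
  (∀ x, δ x x = ⊥) ∧ (∀ x y, δ x y = δ y x) ∧
    (∀ x y z, δ x z ≤ δ x y ⊔ δ y z)

/-- The V-condition of type 3/2. -/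
def VConditionThreeHalves {X : Type*} {S : Type*} [SemilatticeSup S] [OrderBot S]
    (δ : X → X → S) : Prop :=
  ∀ x y : X, ∀ a b : S, δ x y ≤ a ⊔ b →
    ∃ z : X, (δ x z ≤ a ∧ δ z y ≤ b) ∨ (δ x z ≤ b ∧ δ z y ≤ a)

/-- `S` satisfies `WURP⁼(e)` with witness `m`. -/
def WURPeqWith {S : Type*} [SemilatticeSup S] [OrderBot S] (m : ℕ) (e : S) : Prop :=
  ∀ (I : Type u) (a b : I → S), (∀ i, e ≤ a i ⊔ b i) →
    ∃ (J : Fin m → Set I) (c : I → I → S),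
      (∀ i : I, ∃ u : Fin m, i ∈ J u) ∧
      (∀ u : Fin m, ∀ i ∈ J u, ∀ j ∈ J u,
        c i j ≤ a i ⊔ a j ∧ c i j ≤ b i ⊔ b j ∧ e ≤ a j ⊔ b i ⊔ c i j) ∧
      (∀ i j k : I, c i k ≤ c i j ⊔ c j k)

/-- `S` satisfies `WURP⁼(e)`. -/
def WURPeq {S : Type*} [SemilatticeSup S] [OrderBot S] (e : S) : Prop :=
  ∃ m : ℕ, 0 < m ∧ WURPeqWith.{u} m e

/-- If `δ : X × X → S` is a V-distance of type 3/2 whose range join-generates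
`S`, then `S` satisfies `WURP⁼(e)` for every `e ∈ S`; moreover, if
`e = ⋁_{ℓ<n} δ(x ℓ, y ℓ)`, then `m = 2 ^ n` is a witness. -/
theorem wurp_of_type_three_halves {X : Type*} {S : Type*} [SemilatticeSup S]
    [OrderBot S] (δ : X → X → S) (hδ : IsSDistance δ)
    (hV : VConditionThreeHalves δ)
    (hgen : ∀ s : S, ∃ t : Finset (X × X), s = t.sup fun p => δ p.1 p.2) :
    (∀ e : S, WURPeq.{u} e) ∧
    (∀ (n : ℕ) (x y : Fin n → X),
      WURPeqWith.{u} (2 ^ n) (Finset.univ.sup fun ℓ => δ (x ℓ) (y ℓ))) := by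
  classical
  obtain ⟨hrefl, hsymm, htri⟩ := hδ
  have main : ∀ (n : ℕ) (x y : Fin n → X),
      WURPeqWith.{u} (2 ^ n) (Finset.univ.sup fun ℓ => δ (x ℓ) (y ℓ)) := by
    intro n x y I a b hab
    set e : S := Finset.univ.sup fun ℓ => δ (x ℓ) (y ℓ) with he
    have hch : ∀ (i : I) (ℓ : Fin n), ∃ p : X × Bool,
        (p.2 = true ∧ δ (x ℓ) p.1 ≤ a i ∧ δ p.1 (y ℓ) ≤ b i) ∨
        (p.2 = false ∧ δ (x ℓ) p.1 ≤ b i ∧ δ p.1 (y ℓ) ≤ a i) := by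
      intro i ℓ
      obtain ⟨w, hw⟩ := hV (x ℓ) (y ℓ) (a i) (b i)
        ((Finset.le_sup (f := fun ℓ => δ (x ℓ) (y ℓ)) (Finset.mem_univ ℓ)).trans (hab i))
      rcases hw with h | h
      · exact ⟨(w, true), Or.inl ⟨rfl, h⟩⟩
      · exact ⟨(w, false), Or.inr ⟨rfl, h⟩⟩
    choose p hp using hch
    set z : I → Fin n → X := fun i ℓ => (p i ℓ).1 with hzdef
    set ε : I → Fin n → Bool := fun i ℓ => (p i ℓ).2 with hεdef
    have E : (Fin n → Bool) ≃ Fin (2 ^ n) := Fintype.equivFinOfCardEq (by simp)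
    refine ⟨fun u => {i | E (ε i) = u},
      fun i j => Finset.univ.sup fun ℓ => δ (z i ℓ) (z j ℓ), ?_, ?_, ?_⟩
    · intro i; exact ⟨E (ε i), rfl⟩
    · intro u i hi j hj
      have hij : ε i = ε j := E.injective (hi.trans hj.symm)
      have key : ∀ ℓ : Fin n,
          (δ (x ℓ) (z i ℓ) ≤ a i ∧ δ (z i ℓ) (y ℓ) ≤ b i ∧
           δ (x ℓ) (z j ℓ) ≤ a j ∧ δ (z j ℓ) (y ℓ) ≤ b j) ∨
          (δ (x ℓ) (z i ℓ) ≤ b i ∧ δ (z i ℓ) (y ℓ) ≤ a i ∧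
           δ (x ℓ) (z j ℓ) ≤ b j ∧ δ (z j ℓ) (y ℓ) ≤ a j) := by
        intro ℓ
        have hee : (p i ℓ).2 = (p j ℓ).2 := congrFun hij ℓ
        rcases hp i ℓ with ⟨hti, h1i, h2i⟩ | ⟨hti, h1i, h2i⟩ <;>
          rcases hp j ℓ with ⟨htj, h1j, h2j⟩ | ⟨htj, h1j, h2j⟩
        · exact Or.inl ⟨h1i, h2i, h1j, h2j⟩
        · rw [hti, htj] at hee; exact absurd hee (by simp)
        · rw [hti, htj] at hee; exact absurd hee (by simp)
        · exact Or.inr ⟨h1i, h2i, h1j, h2j⟩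
      refine ⟨?_, ?_, ?_⟩
      · refine Finset.sup_le fun ℓ _ => ?_
        rcases key ℓ with ⟨h1i, h2i, h1j, h2j⟩ | ⟨h1i, h2i, h1j, h2j⟩
        · calc δ (z i ℓ) (z j ℓ) ≤ δ (z i ℓ) (x ℓ) ⊔ δ (x ℓ) (z j ℓ) := htri _ _ _
            _ ≤ a i ⊔ a j := sup_le_sup (by rw [hsymm]; exact h1i) h1j
        · calc δ (z i ℓ) (z j ℓ) ≤ δ (z i ℓ) (y ℓ) ⊔ δ (y ℓ) (z j ℓ) := htri _ _ _
            _ ≤ a i ⊔ a j := sup_le_sup h2i (by rw [hsymm]; exact h2j)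
      · refine Finset.sup_le fun ℓ _ => ?_
        rcases key ℓ with ⟨h1i, h2i, h1j, h2j⟩ | ⟨h1i, h2i, h1j, h2j⟩
        · calc δ (z i ℓ) (z j ℓ) ≤ δ (z i ℓ) (y ℓ) ⊔ δ (y ℓ) (z j ℓ) := htri _ _ _
            _ ≤ b i ⊔ b j := sup_le_sup h2i (by rw [hsymm]; exact h2j)
        · calc δ (z i ℓ) (z j ℓ) ≤ δ (z i ℓ) (x ℓ) ⊔ δ (x ℓ) (z j ℓ) := htri _ _ _
            _ ≤ b i ⊔ b j := sup_le_sup (by rw [hsymm]; exact h1i) h1j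
      · rw [he]
        refine Finset.sup_le fun ℓ _ => ?_
        have hc : δ (z i ℓ) (z j ℓ) ≤ Finset.univ.sup fun ℓ => δ (z i ℓ) (z j ℓ) :=
          Finset.le_sup (f := fun ℓ => δ (z i ℓ) (z j ℓ)) (Finset.mem_univ ℓ)
        rcases key ℓ with ⟨h1i, h2i, h1j, h2j⟩ | ⟨h1i, h2i, h1j, h2j⟩
        · calc δ (x ℓ) (y ℓ) ≤ δ (x ℓ) (z j ℓ) ⊔ δ (z j ℓ) (y ℓ) := htri _ _ _
            _ ≤ δ (x ℓ) (z j ℓ) ⊔ (δ (z j ℓ) (z i ℓ) ⊔ δ (z i ℓ) (y ℓ)) :=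
              sup_le_sup_left (htri _ _ _) _
            _ ≤ a j ⊔ b i ⊔ Finset.univ.sup fun ℓ => δ (z i ℓ) (z j ℓ) := by
              have : δ (z j ℓ) (z i ℓ) = δ (z i ℓ) (z j ℓ) := hsymm _ _
              rw [this]
              refine sup_le ?_ (sup_le ?_ ?_)
              · exact le_sup_of_le_left (le_sup_of_le_left h1j)
              · exact le_sup_right.trans' hc
              · exact le_sup_of_le_left (le_sup_of_le_right h2i)
        · calc δ (x ℓ) (y ℓ) ≤ δ (x ℓ) (z i ℓ) ⊔ δ (z i ℓ) (y ℓ) := htri _ _ _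
            _ ≤ δ (x ℓ) (z i ℓ) ⊔ (δ (z i ℓ) (z j ℓ) ⊔ δ (z j ℓ) (y ℓ)) :=
              sup_le_sup_left (htri _ _ _) _
            _ ≤ a j ⊔ b i ⊔ Finset.univ.sup fun ℓ => δ (z i ℓ) (z j ℓ) := by
              refine sup_le ?_ (sup_le ?_ ?_)
              · exact le_sup_of_le_left (le_sup_of_le_right h1i)
              · exact le_sup_right.trans' hc
              · exact le_sup_of_le_left (le_sup_of_le_left h2j)
    · intro i j k
      refine Finset.sup_le fun ℓ _ => ?_
      exact le_trans (htri _ (z j ℓ) _)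
        (sup_le_sup (Finset.le_sup (f := fun ℓ => δ (z i ℓ) (z j ℓ)) (Finset.mem_univ ℓ))
          (Finset.le_sup (f := fun ℓ => δ (z j ℓ) (z k ℓ)) (Finset.mem_univ ℓ)))
  refine ⟨?_, main⟩
  intro e
  obtain ⟨t, ht⟩ := hgen e
  refine ⟨2 ^ t.card, Nat.two_pow_pos _, ?_⟩
  have heq : e = Finset.univ.sup fun ℓ : Fin t.card =>
      δ ((t.equivFin.symm ℓ : X × X)).1 ((t.equivFin.symm ℓ : X × X)).2 := by
    rw [ht]
    apply le_antisymm
    · refine Finset.sup_le fun q hq => ?_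
      have : ((t.equivFin.symm (t.equivFin ⟨q, hq⟩) : X × X)) = q := by simp
      calc δ q.1 q.2 = δ ((t.equivFin.symm (t.equivFin ⟨q, hq⟩) : X × X)).1
            ((t.equivFin.symm (t.equivFin ⟨q, hq⟩) : X × X)).2 := by rw [this]
        _ ≤ _ := Finset.le_sup (f := fun ℓ : Fin t.card =>
              δ ((t.equivFin.symm ℓ : X × X)).1 ((t.equivFin.symm ℓ : X × X)).2)
            (Finset.mem_univ (t.equivFin ⟨q, hq⟩))
    · refine Finset.sup_le fun ℓ _ => ?_
      exact Finset.le_sup (f := fun q : X × X => δ q.1 q.2) (t.equivFin.symm ℓ).2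
  rw [heq]
  exact main t.card _ _
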